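/- arXiv:2604.15922 — 3 statements merged into one kernel-verified Lean document; each statement's English description precedes it below -/
import Mathlib

section
/- Let f : ℕ × ℤ → ℝ and let Δ, L_b > 0. Suppose that for every k ∈ ℕ there is a unique ι*(k) ∈ ℤ maximizing i ↦ f(k, i), and that for all k and all i ∈ ℤ, L_b·((i + 1/2)Δ − ι*(k)·Δ)² ≤ (f(k,i) − f(k,i+1))·((i + 1/2)Δ − ι*(k)·Δ). Then for all k ∈ ℕ and i ∈ ℤ, f(k, ι*(k)) − f(k, i) ≥ (L_b·Δ/2)·(i − ι*(k))². -/
/-- quadratic growth away from the unique maximizer, obtained by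
    telescoping the curvature assumption. -/
theorem quadratic_growth_from_curvature (f : ℕ → ℤ → ℝ) (Δ Lb : ℝ)
    (hΔ : 0 < Δ) (hLb : 0 < Lb) (ιs : ℕ → ℤ)
    (hmax : ∀ k : ℕ, ∀ i : ℤ, i ≠ ιs k → f k i < f k (ιs k))
    (hcurv : ∀ k : ℕ, ∀ i : ℤ,
      Lb * (((i : ℝ) + 1 / 2) * Δ - (ιs k : ℝ) * Δ) ^ 2 ≤
        (f k i - f k (i + 1)) * (((i : ℝ) + 1 / 2) * Δ - (ιs k : ℝ) * Δ)) :
    ∀ k : ℕ, ∀ i : ℤ,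
      f k (ιs k) - f k i ≥ Lb * Δ / 2 * ((i : ℝ) - (ιs k : ℝ)) ^ 2 := by
  intro k i
  have stepR : ∀ n : ℕ, f k (ιs k + n) - f k (ιs k + n + 1) ≥ Lb * Δ * ((n : ℝ) + 1 / 2) := by
    intro n
    have h := hcurv k (ιs k + n)
    have hd : (((ιs k + (n : ℤ) : ℤ) : ℝ) + 1 / 2) * Δ - (ιs k : ℝ) * Δ
        = ((n : ℝ) + 1 / 2) * Δ := by push_cast; ring
    rw [hd] at h
    have hpos : (0 : ℝ) < ((n : ℝ) + 1 / 2) * Δ := by positivity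
    nlinarith
  have stepL : ∀ n : ℕ, f k (ιs k - n) - f k (ιs k - n - 1) ≥ Lb * Δ * ((n : ℝ) + 1 / 2) := by
    intro n
    have h := hcurv k (ιs k - n - 1)
    have hd : (((ιs k - (n : ℤ) - 1 : ℤ) : ℝ) + 1 / 2) * Δ - (ιs k : ℝ) * Δ
        = -(((n : ℝ) + 1 / 2) * Δ) := by push_cast; ring
    have heq : (ιs k - (n : ℤ) - 1 + 1 : ℤ) = ιs k - n := by ring
    rw [hd, heq] at h
    have hpos : (0 : ℝ) < ((n : ℝ) + 1 / 2) * Δ := by positivity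
    nlinarith
  have mainR : ∀ n : ℕ, f k (ιs k) - f k (ιs k + n) ≥ Lb * Δ / 2 * (n : ℝ) ^ 2 := by
    intro n
    induction n with
    | zero => simp
    | succ n ih =>
      have h := stepR n
      have heq : (ιs k + ((n : ℤ) + 1) : ℤ) = ιs k + (n : ℤ) + 1 := by ring
      push_cast
      rw [heq]
      push_cast at ih
      nlinarith
  have mainL : ∀ n : ℕ, f k (ιs k) - f k (ιs k - n) ≥ Lb * Δ / 2 * (n : ℝ) ^ 2 := by
    intro n
    induction n with
    | zero => simp
    | succ n ih =>
      have h := stepL n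
      have heq : (ιs k - ((n : ℤ) + 1) : ℤ) = ιs k - (n : ℤ) - 1 := by ring
      push_cast
      rw [heq]
      push_cast at ih
      nlinarith
  rcases le_or_gt (ιs k) i with hle | hlt
  · obtain ⟨n, hn⟩ : ∃ n : ℕ, i = ιs k + n :=
      ⟨(i - ιs k).toNat, by rw [Int.toNat_of_nonneg (by omega)]; ring⟩
    subst hn
    have := mainR n
    have : ((ιs k + (n : ℤ) : ℤ) : ℝ) - (ιs k : ℝ) = (n : ℝ) := by push_cast; ring
    rw [this]
    exact mainR n
  · obtain ⟨n, hn⟩ : ∃ n : ℕ, i = ιs k - n :=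
      ⟨(ιs k - i).toNat, by rw [Int.toNat_of_nonneg (by omega)]; ring⟩
    subst hn
    have : ((ιs k - (n : ℤ) : ℤ) : ℝ) - (ιs k : ℝ) = -(n : ℝ) := by push_cast; ring
    rw [this]
    have := mainL n
    nlinarith [mainL n]
end

section
/- Let f : ℕ × ℤ → ℝ, let Δ, L_b, L_k > 0, and for each k let ι*(k) ∈ ℤ be the unique maximizer of i ↦ f(k,i). Assume: (a) f(k, ι*(k)) − f(k,i) ≥ (L_b·Δ/2)·(i − ι*(k))² for all k, i; (b) |f(k+1,i) − f(k,i)| ≤ L_k for all k, i. Then for all k, N ∈ ℕ: |ι*(k+N) − ι*(k)|·Δ ≤ 2·√(L_k·Δ·N/L_b). -/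
/-- Lemma 3: drift bound on the time-varying maximizer. -/
theorem maximizer_drift_bound (f : ℕ → ℤ → ℝ) (Δ Lb Lk : ℝ)
    (hΔ : 0 < Δ) (hLb : 0 < Lb) (hLk : 0 < Lk) (ιs : ℕ → ℤ)
    (hmax : ∀ k : ℕ, ∀ i : ℤ, i ≠ ιs k → f k i < f k (ιs k))
    (ha : ∀ k : ℕ, ∀ i : ℤ,
      f k (ιs k) - f k i ≥ Lb * Δ / 2 * ((i : ℝ) - (ιs k : ℝ)) ^ 2)
    (hb : ∀ k : ℕ, ∀ i : ℤ, |f (k + 1) i - f k i| ≤ Lk) :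
    ∀ k N : ℕ,
      |(ιs (k + N) : ℝ) - (ιs k : ℝ)| * Δ ≤ 2 * Real.sqrt (Lk * Δ * (N : ℝ) / Lb) := by
  -- telescoping bound
  have htel : ∀ k N : ℕ, ∀ i : ℤ, |f (k + N) i - f k i| ≤ Lk * N := by
    intro k N
    induction N with
    | zero => intro i; simp
    | succ n ih =>
      intro i
      have h1 := ih i
      have h2 := hb (k + n) i
      have : |f (k + (n + 1)) i - f k i|
          ≤ |f (k + n + 1) i - f (k + n) i| + |f (k + n) i - f k i| := by
        have : f (k + (n + 1)) i - f k i
            = (f (k + n + 1) i - f (k + n) i) + (f (k + n) i - f k i) := by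
          ring_nf
        rw [this]; exact abs_add_le _ _
      calc |f (k + (n + 1)) i - f k i| ≤ _ := this
        _ ≤ Lk + Lk * n := add_le_add h2 h1
        _ = Lk * (n + 1 : ℕ) := by push_cast; ring
  intro k N
  set a := ιs k
  set b := ιs (k + N)
  set d : ℝ := (b : ℝ) - (a : ℝ)
  have h1 : f (k + N) a ≤ f (k + N) b := by
    rcases eq_or_ne a b with h | h
    · rw [h]
    · exact le_of_lt (hmax (k + N) a h)
  have h2 := abs_le.1 (htel k N a)
  have h3 := abs_le.1 (htel k N b)
  have h4 : Lb * Δ / 2 * d ^ 2 ≤ f k a - f k b := ha k b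
  clear_value d
  have key : Lb * Δ / 2 * d ^ 2 ≤ 2 * (Lk * N) := by
    have : f k a - f k b ≤ 2 * (Lk * N) := by
      have hA : f k a ≤ f (k + N) a + Lk * N := by linarith [h2.1]
      have hB : f (k + N) b - Lk * N ≤ f k b := by linarith [h3.2]
      linarith
    linarith
  have hd2 : d ^ 2 * Δ ^ 2 ≤ 4 * (Lk * Δ * N / Lb) := by
    have h5 : Lb * (d ^ 2 * Δ ^ 2) ≤ 4 * (Lk * Δ * N) := by
      have h6 := mul_le_mul_of_nonneg_right key hΔ.le
      nlinarith [h6]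
    rw [show (4:ℝ) * (Lk * Δ * N / Lb) = 4 * (Lk * Δ * N) / Lb by ring,
      le_div_iff₀ hLb]
    linarith
  have habs : (|d| * Δ) ^ 2 ≤ 4 * (Lk * Δ * N / Lb) := by
    calc (|d| * Δ) ^ 2 = d ^ 2 * Δ ^ 2 := by rw [mul_pow, sq_abs]
      _ ≤ _ := hd2
  have hX : (0:ℝ) ≤ Lk * Δ * N / Lb := by positivity
  have h0 : 0 ≤ |d| * Δ := mul_nonneg (abs_nonneg d) hΔ.le
  calc |d| * Δ = Real.sqrt ((|d| * Δ) ^ 2) := (Real.sqrt_sq h0).symm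
    _ ≤ Real.sqrt (4 * (Lk * Δ * N / Lb)) := Real.sqrt_le_sqrt habs
    _ = 2 * Real.sqrt (Lk * Δ * N / Lb) := by
        rw [show (4:ℝ) = 2^2 by norm_num, Real.sqrt_mul (by positivity),
          Real.sqrt_sq (by norm_num)]
end

section
/- Let ρ, L_k > 0, λ ∈ (0, 1/2], k ∈ ℕ, p ∈ ℕ with p ≤ k, and let J ⊆ {0,…,k} be a nonempty finite set with max J = p. Suppose y : ℕ → ℝ and F ∈ ℝ satisfy |y(j) − F| ≤ ρ + (k+1−j)·L_k for all j ∈ J. Then the weighted mean μ = (Σ_{j∈J} λ^(k+1−j)·y(j))/(Σ_{j∈J} λ^(k+1−j)) satisfies |μ − F| ≤ ρ + (2(k+1−p) + 2)·L_k. -/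
open Finset

lemma half_geom_sum (n : ℕ) : ∑ i ∈ Finset.range n, ((1:ℝ)/2)^i = 2 - 2*(1/2)^n := by
  induction n with
  | zero => simp
  | succ n ih => rw [Finset.sum_range_succ, ih]; ring

lemma half_rgeom_sum (n : ℕ) :
    ∑ i ∈ Finset.range n, (i:ℝ)*((1:ℝ)/2)^i = 2 - (2*n+2)*(1/2)^n := by
  induction n with
  | zero => simp
  | succ n ih => rw [Finset.sum_range_succ, ih]; push_cast; ring

lemma aux_sum_bound (lam : ℝ) (h0 : 0 < lam) (h1 : lam ≤ 1/2) (q n : ℕ) :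
    ∑ i ∈ Finset.range n, ((q:ℝ) + i) * lam ^ i ≤ 2 * q + 2 := by
  have step : ∑ i ∈ Finset.range n, ((q:ℝ) + i) * lam ^ i ≤
      ∑ i ∈ Finset.range n, ((q:ℝ) + i) * ((1:ℝ)/2) ^ i := by
    apply Finset.sum_le_sum
    intro i _
    have hnn : (0:ℝ) ≤ (q:ℝ) + i := by positivity
    exact mul_le_mul_of_nonneg_left (pow_le_pow_left₀ h0.le h1 i) hnn
  refine step.trans ?_
  have split : ∑ i ∈ Finset.range n, ((q:ℝ) + i) * ((1:ℝ)/2) ^ i =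
      (q:ℝ) * (∑ i ∈ Finset.range n, ((1:ℝ)/2)^i) +
      ∑ i ∈ Finset.range n, (i:ℝ)*((1:ℝ)/2)^i := by
    rw [Finset.mul_sum, ← Finset.sum_add_distrib]
    congr 1; ext i; ring
  rw [split, half_geom_sum, half_rgeom_sum]
  have h2 : (0:ℝ) < (1/2:ℝ)^n := by positivity
  nlinarith [Nat.cast_nonneg (α := ℝ) q, Nat.cast_nonneg (α := ℝ) n]

/-- estimation-error bound for the exponentially weighted mean
    (case M = 0): |μ − F| ≤ ρ + (2(k+1−p) + 2)·L_k. -/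
theorem weighted_mean_error_bound (ρ Lk lam : ℝ) (hρ : 0 < ρ) (hLk : 0 < Lk)
    (h0 : 0 < lam) (h1 : lam ≤ 1 / 2) (k p : ℕ) (hpk : p ≤ k)
    (J : Finset ℕ) (hne : J.Nonempty) (hJ : J ⊆ Finset.range (k + 1))
    (hmax : J.max' hne = p) (y : ℕ → ℝ) (F : ℝ)
    (hy : ∀ j ∈ J, |y j - F| ≤ ρ + ((k : ℝ) + 1 - (j : ℝ)) * Lk) :
    |(∑ j ∈ J, lam ^ (k + 1 - j) * y j) / (∑ j ∈ J, lam ^ (k + 1 - j)) - F| ≤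
      ρ + (2 * ((k : ℝ) + 1 - (p : ℝ)) + 2) * Lk := by
  set q : ℕ := k + 1 - p with hq
  have hpJ : p ∈ J := hmax ▸ J.max'_mem hne
  have hjk : ∀ j ∈ J, j ≤ k := fun j hj => Nat.lt_succ_iff.mp (Finset.mem_range.mp (hJ hj))
  have hjp : ∀ j ∈ J, j ≤ p := fun j hj => hmax ▸ Finset.le_max' J j hj
  set W : ℝ := ∑ j ∈ J, lam ^ (k + 1 - j) with hWdef
  have hW : 0 < W := Finset.sum_pos (fun j _ => pow_pos h0 _) hne
  have hWlb : lam ^ q ≤ W := by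
    have := Finset.single_le_sum (f := fun j => lam ^ (k + 1 - j))
      (fun j _ => (pow_pos h0 _).le) hpJ
    simpa [hq] using this
  -- numerator rewrite
  have hsum : ∑ j ∈ J, lam ^ (k + 1 - j) * (y j - F)
      = (∑ j ∈ J, lam ^ (k + 1 - j) * y j) - F * W := by
    rw [hWdef, Finset.mul_sum, ← Finset.sum_sub_distrib]
    congr 1; ext j; ring
  have hmu : (∑ j ∈ J, lam ^ (k + 1 - j) * y j) / W - F
      = (∑ j ∈ J, lam ^ (k + 1 - j) * (y j - F)) / W := by
    rw [hsum, sub_div, mul_div_assoc, div_self hW.ne', mul_one]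
  -- cast identity for j ∈ J
  have hcast : ∀ j ∈ J, ((k:ℝ) + 1 - (j:ℝ)) = ((k + 1 - j : ℕ) : ℝ) := by
    intro j hj
    have : j ≤ k + 1 := le_trans (hjk j hj) (Nat.le_succ k)
    push_cast [Nat.cast_sub this]; ring
  -- bound the numerator
  set T : ℝ := ∑ j ∈ J, ((k + 1 - j : ℕ) : ℝ) * lam ^ (k + 1 - j) with hT
  have hnum : |∑ j ∈ J, lam ^ (k + 1 - j) * (y j - F)| ≤ ρ * W + Lk * T := by
    calc |∑ j ∈ J, lam ^ (k + 1 - j) * (y j - F)|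
        ≤ ∑ j ∈ J, |lam ^ (k + 1 - j) * (y j - F)| := Finset.abs_sum_le_sum_abs _ _
      _ ≤ ∑ j ∈ J, lam ^ (k + 1 - j) * (ρ + ((k + 1 - j : ℕ) : ℝ) * Lk) := by
          apply Finset.sum_le_sum
          intro j hj
          rw [abs_mul, abs_of_pos (pow_pos h0 _)]
          have := hy j hj
          rw [hcast j hj] at this
          exact mul_le_mul_of_nonneg_left this (pow_pos h0 _).le
      _ = ρ * W + Lk * T := by
          rw [hWdef, hT, Finset.mul_sum, Finset.mul_sum, ← Finset.sum_add_distrib]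
          congr 1; ext j; ring
  -- bound T
  have hTbound : T ≤ lam ^ q * (2 * q + 2) := by
    have hinj : Set.InjOn (fun j => k + 1 - j) ↑J := by
      intro a ha b hb hab
      have ha' : a ≤ k + 1 := le_trans (hjk a ha) (Nat.le_succ k)
      have hb' : b ≤ k + 1 := le_trans (hjk b hb) (Nat.le_succ k)
      dsimp only at hab
      omega
    have himg : T = ∑ m ∈ J.image (fun j => k + 1 - j), (m : ℝ) * lam ^ m := by
      rw [hT, Finset.sum_image (fun a ha b hb => hinj ha hb)]
    have hsub : J.image (fun j => k + 1 - j) ⊆ Finset.Icc q (k + 1) := by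
      intro m hm
      obtain ⟨j, hj, rfl⟩ := Finset.mem_image.mp hm
      have := hjp j hj
      have := hjk j hj
      rw [Finset.mem_Icc]; omega
    have h1' : T ≤ ∑ m ∈ Finset.Icc q (k + 1), (m : ℝ) * lam ^ m := by
      rw [himg]
      exact Finset.sum_le_sum_of_subset_of_nonneg hsub
        (fun m _ _ => by positivity)
    refine h1'.trans ?_
    rw [← Finset.Ico_add_one_right_eq_Icc, Finset.sum_Ico_eq_sum_range]
    have : ∑ i ∈ Finset.range (k + 1 + 1 - q), ((q + i : ℕ) : ℝ) * lam ^ (q + i)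
        = lam ^ q * ∑ i ∈ Finset.range (k + 1 + 1 - q), ((q:ℝ) + i) * lam ^ i := by
      rw [Finset.mul_sum]
      congr 1; ext i
      push_cast
      rw [pow_add]; ring
    rw [this]
    exact mul_le_mul_of_nonneg_left (aux_sum_bound lam h0 h1 q _) (pow_pos h0 q).le
  -- put it together
  rw [hmu, abs_div, abs_of_pos hW]
  have hTnn : 0 ≤ T := by
    rw [hT]; exact Finset.sum_nonneg fun j _ => by positivity
  have hTW : T / W ≤ 2 * q + 2 := by
    have h1'' : T / W ≤ T / lam ^ q :=
      div_le_div_of_nonneg_left hTnn (pow_pos h0 q) hWlb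
    refine h1''.trans ?_
    rw [div_le_iff₀ (pow_pos h0 q)]
    calc T ≤ lam ^ q * (2 * q + 2) := hTbound
      _ = (2 * ↑q + 2) * lam ^ q := by ring
  have hqcast : ((k:ℝ) + 1 - (p:ℝ)) = (q : ℝ) := by
    rw [hq]; push_cast [Nat.cast_sub (le_trans hpk (Nat.le_succ k))]; ring
  rw [hqcast]
  calc |∑ j ∈ J, lam ^ (k + 1 - j) * (y j - F)| / W
      ≤ (ρ * W + Lk * T) / W := by gcongr
    _ = ρ + Lk * (T / W) := by field_simp
    _ ≤ ρ + Lk * (2 * q + 2) := by nlinarith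
    _ = ρ + (2 * (q:ℝ) + 2) * Lk := by ring
end
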